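/- Let α ∈ ((√10-2)/2, 2-√2) and consider the Nakada map T_{α,0}(x) = 1/|x| - ⌊1/|x| + 1 - α⌋ and the Ito–Tanaka map T_{α,1}(x) = 1/x - ⌊1/x + 1 - α⌋ on [α-1, α] (with value 0 at 0). Then T_{α,j}(α) = (1-2α)/α for j = 0,1, T_{α,0}((1-2α)/α) = (5α-3)/(1-2α), and T_{α,1}((1-2α)/α) = (4-7α)/(1-2α). -/

import Mathlib

/-- The Nakada `α`-continued fraction map `T_{α,0}(x) = 1/|x| - ⌊1/|x| + 1 - α⌋`,
with value `0` at `0`. -/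
noncomputable def nakadaCF (α x : ℝ) : ℝ :=
  if x = 0 then 0 else 1/|x| - (⌊1/|x| + 1 - α⌋ : ℤ)

/-- The Ito–Tanaka `α`-continued fraction map `T_{α,1}(x) = 1/x - ⌊1/x + 1 - α⌋`,
with value `0` at `0`. -/
noncomputable def itoTanakaCF (α x : ℝ) : ℝ :=
  if x = 0 then 0 else 1/x - (⌊1/x + 1 - α⌋ : ℤ)

/-- For `α ∈ ((√10-2)/2, 2-√2)`: `T_{α,j}(α) = (1-2α)/α` for `j = 0,1`,
`T_{α,0}((1-2α)/α) = (5α-3)/(1-2α)` and `T_{α,1}((1-2α)/α) = (4-7α)/(1-2α)`. -/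
theorem stmt14 (α : ℝ)
    (hα : α ∈ Set.Ioo ((Real.sqrt 10 - 2)/2) (2 - Real.sqrt 2)) :
    nakadaCF α α = (1-2*α)/α ∧
    itoTanakaCF α α = (1-2*α)/α ∧
    nakadaCF α ((1-2*α)/α) = (5*α-3)/(1-2*α) ∧
    itoTanakaCF α ((1-2*α)/α) = (4-7*α)/(1-2*α) := by
  obtain ⟨hl, hr⟩ := hα
  have s10 : Real.sqrt 10 ^ 2 = 10 := Real.sq_sqrt (by norm_num)
  have s2 : Real.sqrt 2 ^ 2 = 2 := Real.sq_sqrt (by norm_num)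
  have s10n := Real.sqrt_nonneg 10
  have s2n := Real.sqrt_nonneg 2
  have ha1 : (0.58:ℝ) < α := by nlinarith
  have ha2 : α < 0.59 := by nlinarith
  have hαpos : (0:ℝ) < α := by linarith
  have hαne : α ≠ 0 := ne_of_gt hαpos
  have hd : (0:ℝ) < 2*α - 1 := by linarith
  have hdne : (1:ℝ) - 2*α ≠ 0 := by intro h; nlinarith
  have hdneg : (1:ℝ) - 2*α < 0 := by linarith
  have hyneg : (1-2*α)/α < 0 := div_neg_of_neg_of_pos (by linarith) hαpos
  have hyne : (1-2*α)/α ≠ 0 := ne_of_lt hyneg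
  -- floor facts
  have f1 : (⌊1/α + 1 - α⌋ : ℤ) = 2 := by
    rw [Int.floor_eq_iff]
    push_cast
    constructor
    · have h : (1+α) ≤ 1/α := (le_div_iff₀ hαpos).mpr (by nlinarith)
      linarith
    · have h : 1/α < 2+α := (div_lt_iff₀ hαpos).mpr (by nlinarith)
      linarith
  have f2 : (⌊α/(2*α-1) + 1 - α⌋ : ℤ) = 3 := by
    rw [Int.floor_eq_iff]
    push_cast
    constructor
    · have h : (2+α) ≤ α/(2*α-1) := (le_div_iff₀ hd).mpr (by nlinarith)
      linarith
    · have h : α/(2*α-1) < 3+α := (div_lt_iff₀ hd).mpr (by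
        nlinarith [mul_pos (show (0:ℝ) < 2*α+2-Real.sqrt 10 by linarith)
          (show (0:ℝ) < 2*α+2+Real.sqrt 10 by linarith)])
      linarith
  have f3 : (⌊α/(1-2*α) + 1 - α⌋ : ℤ) = -4 := by
    rw [Int.floor_eq_iff]
    push_cast
    constructor
    · have h : (-5+α) ≤ α/(1-2*α) := (le_div_iff_of_neg hdneg).mpr (by nlinarith)
      linarith
    · have h : α/(1-2*α) < -4+α := (div_lt_iff_of_neg hdneg).mpr (by
        nlinarith [mul_pos (show (0:ℝ) < 2-α-Real.sqrt 2 by linarith)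
          (show (0:ℝ) < 2-α+Real.sqrt 2 by linarith)])
      linarith
  have habsy : |(1-2*α)/α| = (2*α-1)/α := by
    rw [abs_of_neg hyneg]; ring
  have hinvy : 1/((2*α-1)/α) = α/(2*α-1) := one_div_div _ _
  have hinvy2 : 1/((1-2*α)/α) = α/(1-2*α) := one_div_div _ _
  refine ⟨?_, ?_, ?_, ?_⟩
  · rw [nakadaCF, if_neg hαne, abs_of_pos hαpos, f1]
    push_cast
    field_simp
  · rw [itoTanakaCF, if_neg hαne, f1]
    push_cast
    field_simp
  · rw [nakadaCF, if_neg hyne, habsy, hinvy, f2]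
    push_cast
    rw [div_sub' (sub_ne_zero.mpr (by intro h; nlinarith : (2*α:ℝ) ≠ 1))]
    rw [div_eq_div_iff (by linarith) hdne]
    ring
  · rw [itoTanakaCF, if_neg hyne, hinvy2, f3]
    push_cast
    rw [eq_div_iff hdne]
    linear_combination div_mul_cancel₀ α hdne
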